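/- For a ∈ ℂ² with a₁, a₂ ∉ ℤ, the vector space N(a) with basis {x(k) : k ∈ ℤ} and action H·x(k) = (a₁−a₂+2k)x(k), X⁺·x(k) = (a₂−k)x(k+1), X⁻·x(k) = (a₁+k)x(k−1) is a well-defined sl(2,ℂ)-module, and it is simple. -/

import Mathlib

/-- The action of `H` on the module `N(a)`, on the basis `x(k), k ∈ ℤ`
(realized as `ℤ →₀ ℂ`, with `x k := Finsupp.single k 1`):
`H · x(k) = (a₁ - a₂ + 2k) x(k)`. -/
noncomputable def sl2H (a₁ a₂ : ℂ) : Module.End ℂ (ℤ →₀ ℂ) :=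
  Finsupp.lsum ℂ fun k : ℤ => (a₁ - a₂ + 2 * (k : ℂ)) • Finsupp.lsingle k

/-- The action of `X⁺` on `N(a)`: `X⁺ · x(k) = (a₂ - k) x(k+1)`. -/
noncomputable def sl2E (a₂ : ℂ) : Module.End ℂ (ℤ →₀ ℂ) :=
  Finsupp.lsum ℂ fun k : ℤ => (a₂ - (k : ℂ)) • Finsupp.lsingle (k + 1)

/-- The action of `X⁻` on `N(a)`: `X⁻ · x(k) = (a₁ + k) x(k-1)`. -/
noncomputable def sl2F (a₁ : ℂ) : Module.End ℂ (ℤ →₀ ℂ) :=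
  Finsupp.lsum ℂ fun k : ℤ => (a₁ + (k : ℂ)) • Finsupp.lsingle (k - 1)

lemma sl2H_single (a₁ a₂ : ℂ) (k : ℤ) (c : ℂ) :
    sl2H a₁ a₂ (Finsupp.single k c) = (a₁ - a₂ + 2 * (k : ℂ)) • Finsupp.single k c := by
  rw [sl2H, Finsupp.lsum_single, LinearMap.smul_apply, Finsupp.lsingle_apply]

lemma sl2E_single (a₂ : ℂ) (k : ℤ) (c : ℂ) :
    sl2E a₂ (Finsupp.single k c) = (a₂ - (k : ℂ)) • Finsupp.single (k + 1) c := by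
  rw [sl2E, Finsupp.lsum_single, LinearMap.smul_apply, Finsupp.lsingle_apply]

lemma sl2F_single (a₁ : ℂ) (k : ℤ) (c : ℂ) :
    sl2F a₁ (Finsupp.single k c) = (a₁ + (k : ℂ)) • Finsupp.single (k - 1) c := by
  rw [sl2F, Finsupp.lsum_single, LinearMap.smul_apply, Finsupp.lsingle_apply]

lemma sl2_brHE (a₁ a₂ : ℂ) : ⁅sl2H a₁ a₂, sl2E a₂⁆ = (2 : ℂ) • sl2E a₂ := by
  rw [LieRing.of_associative_ring_bracket]
  refine Finsupp.lhom_ext fun k c => ?_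
  simp only [LinearMap.sub_apply, Module.End.mul_apply, LinearMap.smul_apply,
    sl2H_single, sl2E_single, map_smul, Finsupp.smul_single, smul_eq_mul,
    ← Finsupp.single_sub]
  congr 1
  push_cast
  ring

lemma sl2_brHF (a₁ a₂ : ℂ) : ⁅sl2H a₁ a₂, sl2F a₁⁆ = (-2 : ℂ) • sl2F a₁ := by
  rw [LieRing.of_associative_ring_bracket]
  refine Finsupp.lhom_ext fun k c => ?_
  simp only [LinearMap.sub_apply, Module.End.mul_apply, LinearMap.smul_apply,
    sl2H_single, sl2F_single, map_smul, Finsupp.smul_single, smul_eq_mul,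
    ← Finsupp.single_sub]
  congr 1
  push_cast
  ring

lemma sl2_brEF (a₁ a₂ : ℂ) : ⁅sl2E a₂, sl2F a₁⁆ = sl2H a₁ a₂ := by
  rw [LieRing.of_associative_ring_bracket]
  refine Finsupp.lhom_ext fun k c => ?_
  simp only [LinearMap.sub_apply, Module.End.mul_apply, LinearMap.smul_apply,
    sl2H_single, sl2E_single, sl2F_single, map_smul, Finsupp.smul_single, smul_eq_mul,
    sub_add_cancel, add_sub_cancel_right, ← Finsupp.single_sub]
  congr 1
  push_cast
  ring

lemma sl2H_coeff (a₁ a₂ : ℂ) (v : ℤ →₀ ℂ) (j : ℤ) :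
    (sl2H a₁ a₂ v) j = (a₁ - a₂ + 2 * (j : ℂ)) * v j := by
  induction v using Finsupp.induction_linear with
  | zero => simp
  | add f g hf hg => rw [map_add, Finsupp.add_apply, hf, hg, Finsupp.add_apply]; ring
  | single k c =>
    rw [sl2H_single, Finsupp.smul_apply, smul_eq_mul]
    rcases eq_or_ne k j with h | h
    · subst h; rfl
    · rw [Finsupp.single_apply_eq_zero.2 (fun h' => absurd h'.symm (by simpa using h))]
      ring

lemma sl2_components_mem (a₁ a₂ : ℂ) (p : Submodule ℂ (ℤ →₀ ℂ))
    (hp : ∀ v ∈ p, sl2H a₁ a₂ v ∈ p) :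
    ∀ v ∈ p, ∀ j : ℤ, Finsupp.single j (v j) ∈ p := by
  suffices H : ∀ n : ℕ, ∀ v ∈ p, v.support.card = n → ∀ j, Finsupp.single j (v j) ∈ p by
    intro v hv j; exact H _ v hv rfl j
  intro n
  induction n using Nat.strong_induction_on with
  | _ n ih =>
    intro v hv hcard j
    by_cases hj : v j = 0
    · rw [hj, Finsupp.single_zero]; exact p.zero_mem
    have hjsupp : j ∈ v.support := Finsupp.mem_support_iff.2 hj
    by_cases hsing : v.support ⊆ {j}
    · have : v = Finsupp.single j (v j) := by
        ext i
        rcases eq_or_ne i j with h | h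
        · subst h; rw [Finsupp.single_eq_same]
        · rw [Finsupp.single_eq_of_ne' (Ne.symm h),
            Finsupp.notMem_support_iff.1 (fun hi => h (Finset.mem_singleton.1 (hsing hi)))]
      exact this ▸ hv
    · obtain ⟨k, hk, hkj⟩ : ∃ k ∈ v.support, k ≠ j := by
        by_contra h; push_neg at h
        exact hsing fun i hi => Finset.mem_singleton.2 (h i hi)
      set w := sl2H a₁ a₂ v - (a₁ - a₂ + 2 * (k : ℂ)) • v with hw
      have hwmem : w ∈ p := p.sub_mem (hp v hv) (p.smul_mem _ hv)
      have hwc : ∀ i, w i = (2 * ((i : ℂ) - (k : ℂ))) * v i := by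
        intro i
        rw [hw, Finsupp.sub_apply, Finsupp.smul_apply, sl2H_coeff, smul_eq_mul]
        ring
      have hwsupp : w.support ⊂ v.support := by
        constructor
        · intro i hi
          rw [Finsupp.mem_support_iff] at hi ⊢
          intro h0; exact hi (by rw [hwc i, h0, mul_zero])
        · intro hsub
          have : w k = 0 := by rw [hwc k]; ring
          exact (Finsupp.mem_support_iff.1 (hsub hk)) this
      have hlt : w.support.card < n := hcard ▸ Finset.card_lt_card hwsupp
      have hjw : Finsupp.single j (w j) ∈ p := ih _ hlt w hwmem rfl j
      have hne : (2 * ((j : ℂ) - (k : ℂ))) ≠ 0 := by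
        refine mul_ne_zero two_ne_zero (sub_ne_zero.2 ?_)
        exact fun h => hkj ((Int.cast_injective h).symm)
      have : Finsupp.single j (v j) = (2 * ((j : ℂ) - (k : ℂ)))⁻¹ • Finsupp.single j (w j) := by
        rw [Finsupp.smul_single, hwc j, smul_eq_mul, inv_mul_cancel_left₀ hne]
      rw [this]
      exact p.smul_mem _ hjw

theorem stmt_2 (a₁ a₂ : ℂ)
    (ha₁ : ∀ n : ℤ, a₁ ≠ (n : ℂ)) (ha₂ : ∀ n : ℤ, a₂ ≠ (n : ℂ)) :
    -- the formulas from the paper hold on the basis vectors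
    (∀ k : ℤ,
        sl2H a₁ a₂ (Finsupp.single k 1) = (a₁ - a₂ + 2 * (k : ℂ)) • Finsupp.single k 1 ∧
        sl2E a₂ (Finsupp.single k 1) = (a₂ - (k : ℂ)) • Finsupp.single (k + 1) 1 ∧
        sl2F a₁ (Finsupp.single k 1) = (a₁ + (k : ℂ)) • Finsupp.single (k - 1) 1) ∧
    -- the `sl₂`-relations hold, so `N(a)` is a well-defined `sl(2,ℂ)`-module
    (⁅sl2H a₁ a₂, sl2E a₂⁆ = (2 : ℂ) • sl2E a₂ ∧
     ⁅sl2H a₁ a₂, sl2F a₁⁆ = (-2 : ℂ) • sl2F a₁ ∧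
     ⁅sl2E a₂, sl2F a₁⁆ = sl2H a₁ a₂) ∧
    -- simplicity
    (∀ p : Submodule ℂ (ℤ →₀ ℂ),
      (∀ v ∈ p, sl2H a₁ a₂ v ∈ p ∧ sl2E a₂ v ∈ p ∧ sl2F a₁ v ∈ p) → p = ⊥ ∨ p = ⊤) := by
  refine ⟨fun k => ⟨sl2H_single a₁ a₂ k 1, sl2E_single a₂ k 1, sl2F_single a₁ k 1⟩,
    ⟨sl2_brHE a₁ a₂, sl2_brHF a₁ a₂, sl2_brEF a₁ a₂⟩, fun p hp => ?_⟩
  rcases eq_or_ne p ⊥ with hbot | hbot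
  · exact Or.inl hbot
  right
  obtain ⟨v, hv, hv0⟩ := Submodule.ne_bot_iff p |>.1 hbot
  obtain ⟨k, hk⟩ : ∃ k : ℤ, v k ≠ 0 := by
    by_contra h; push_neg at h
    exact hv0 (Finsupp.ext h)
  have hsk : Finsupp.single k (v k) ∈ p :=
    sl2_components_mem a₁ a₂ p (fun u hu => (hp u hu).1) v hv k
  have hone : Finsupp.single k 1 ∈ p := by
    have := p.smul_mem (v k)⁻¹ hsk
    rwa [Finsupp.smul_single, smul_eq_mul, inv_mul_cancel₀ hk] at this
  -- all basis vectors are in p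
  have hall : ∀ m : ℤ, Finsupp.single m 1 ∈ p := by
    have key : ∀ d : ℤ, Finsupp.single (k + d) 1 ∈ p := by
      intro d
      induction d using Int.induction_on with
      | zero => simpa using hone
      | succ i hi =>
        have hE : sl2E a₂ (Finsupp.single (k + i) 1) ∈ p := (hp _ hi).2.1
        rw [sl2E_single] at hE
        have hc : (a₂ - ((k + i : ℤ) : ℂ)) ≠ 0 := sub_ne_zero.2 (ha₂ (k + i))
        have := p.smul_mem (a₂ - ((k + i : ℤ) : ℂ))⁻¹ hE
        rw [smul_smul, inv_mul_cancel₀ hc, one_smul] at this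
        convert this using 2
        ring
      | pred i hi =>
        have hF : sl2F a₁ (Finsupp.single (k + -i) 1) ∈ p := (hp _ hi).2.2
        rw [sl2F_single] at hF
        have hc : (a₁ + ((k + -i : ℤ) : ℂ)) ≠ 0 := by
          intro h
          push_cast at h
          exact ha₁ (-(k - i)) (by push_cast; linear_combination h)
        have := p.smul_mem (a₁ + ((k + -i : ℤ) : ℂ))⁻¹ hF
        rw [smul_smul, inv_mul_cancel₀ hc, one_smul] at this
        convert this using 2
        ring
    intro m
    have := key (m - k)
    rwa [add_sub_cancel] at this
  -- p = ⊤
  rw [Submodule.eq_top_iff']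
  intro u
  induction u using Finsupp.induction with
  | zero => exact p.zero_mem
  | single_add m c f _ _ hf =>
    refine p.add_mem ?_ hf
    have := p.smul_mem c (hall m)
    rwa [Finsupp.smul_single, smul_eq_mul, mul_one] at this
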